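/- For real a, b, x, y with (x,y) ≠ (0,0) and g(x,y) = (x^2+y^2)^{1/2}(1 + λ(x^2−2y^2)/(x^2+y^2))^2, one has a^2 ∂²g/∂x² + 2ab ∂²g/∂x∂y + b^2 ∂²g/∂y² = (x^2+y^2)^{−7/2} (ay − bx)^2 · ( x^4(1 − 10λ − 11λ^2) + x^2 y^2 (2 − 2λ + 104λ^2) + y^4 (1 + 8λ − 20λ^2) ). -/

import Mathlib

open ContinuousLinearMap

theorem HasFDerivAt.sq' {E : Type*} [NormedAddCommGroup E] [NormedSpace ℝ E]
    {f : E → ℝ} {f' : E →L[ℝ] ℝ} {x : E} (hf : HasFDerivAt f f' x) :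
    HasFDerivAt (fun z => f z ^ 2) ((2 * f x) • f') x := by
  have h : HasFDerivAt (fun z => f z * f z) (f x • f' + f x • f') x := hf.mul hf
  rw [show (2 * f x) • f' = f x • f' + f x • f' by rw [two_mul, add_smul]]
  exact h.congr_of_eventuallyEq (Filter.Eventually.of_forall fun z => pow_two (f z))

theorem qpos' {p : ℝ × ℝ} (hp : p ≠ 0) : 0 < p.1 ^ 2 + p.2 ^ 2 := by
  rcases eq_or_ne p.1 0 with h1 | h1
  · have h2 : p.2 ≠ 0 := by
      intro h2; exact hp (Prod.ext h1 h2)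
    positivity
  · positivity

noncomputable def D1f (lam a b : ℝ) (p : ℝ × ℝ) : ℝ :=
  -(3:ℝ)/2 * (2*p.1*a + 2*p.2*b) *
      ((p.1^2+p.2^2) ^ (-(5:ℝ)/2) * ((1+lam)*p.1^2+(1-2*lam)*p.2^2)^2)
  + (2*(1+lam)*p.1*a + 2*(1-2*lam)*p.2*b) *
      (2 * ((p.1^2+p.2^2) ^ (-(3:ℝ)/2) * ((1+lam)*p.1^2+(1-2*lam)*p.2^2)))

theorem lem2 (lam a b : ℝ) (p : ℝ × ℝ) (hp : 0 < p.1 ^ 2 + p.2 ^ 2) :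
    fderiv ℝ (fun z : ℝ×ℝ => (z.1^2+z.2^2) ^ (-(3:ℝ)/2) *
      ((1+lam)*z.1^2+(1-2*lam)*z.2^2)^2) p (a,b) = D1f lam a b p := by
  have h1 : HasFDerivAt (fun z : ℝ×ℝ => z.1) (fst ℝ ℝ ℝ) p := hasFDerivAt_fst
  have h2 : HasFDerivAt (fun z : ℝ×ℝ => z.2) (snd ℝ ℝ ℝ) p := hasFDerivAt_snd
  have hQ : HasFDerivAt (fun z : ℝ×ℝ => z.1^2 + z.2^2) _ p := (h1.sq').add (h2.sq')
  have hr : HasFDerivAt (fun z : ℝ×ℝ => (z.1^2+z.2^2) ^ (-(3:ℝ)/2)) _ p :=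
    hQ.rpow_const (Or.inl hp.ne')
  have hN : HasFDerivAt (fun z : ℝ×ℝ => (1+lam)*z.1^2+(1-2*lam)*z.2^2) _ p :=
    ((h1.sq').const_mul (1+lam)).add ((h2.sq').const_mul (1-2*lam))
  have hG : HasFDerivAt (fun z : ℝ×ℝ => (z.1^2+z.2^2) ^ (-(3:ℝ)/2) *
      ((1+lam)*z.1^2+(1-2*lam)*z.2^2)^2) _ p := hr.mul (hN.sq')
  rw [hG.fderiv]
  simp only [add_apply, smul_apply, coe_fst', coe_snd', smul_eq_mul]
  rw [show (-(3:ℝ)/2 - 1 : ℝ) = -(5:ℝ)/2 from by norm_num]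
  unfold D1f
  ring

theorem lem3 (lam a b x y : ℝ) (hp : 0 < x ^ 2 + y ^ 2) :
    fderiv ℝ (D1f lam a b) (x, y) (a, b) =
      (x ^ 2 + y ^ 2) ^ (-(7 : ℝ) / 2) * (a * y - b * x) ^ 2 *
        (x ^ 4 * (1 - 10 * lam - 11 * lam ^ 2) +
          x ^ 2 * y ^ 2 * (2 - 2 * lam + 104 * lam ^ 2) +
          y ^ 4 * (1 + 8 * lam - 20 * lam ^ 2)) := by
  have hp' : (0:ℝ) < ((x,y) : ℝ×ℝ).1 ^ 2 + ((x,y) : ℝ×ℝ).2 ^ 2 := hp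
  have h1 : HasFDerivAt (fun z : ℝ×ℝ => z.1) (fst ℝ ℝ ℝ) ((x,y) : ℝ×ℝ) := hasFDerivAt_fst
  have h2 : HasFDerivAt (fun z : ℝ×ℝ => z.2) (snd ℝ ℝ ℝ) ((x,y) : ℝ×ℝ) := hasFDerivAt_snd
  have hQ : HasFDerivAt (fun z : ℝ×ℝ => z.1^2 + z.2^2) _ ((x,y) : ℝ×ℝ) := (h1.sq').add (h2.sq')
  have hr5 : HasFDerivAt (fun z : ℝ×ℝ => (z.1^2+z.2^2) ^ (-(5:ℝ)/2)) _ ((x,y) : ℝ×ℝ) :=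
    hQ.rpow_const (Or.inl hp'.ne')
  have hr3 : HasFDerivAt (fun z : ℝ×ℝ => (z.1^2+z.2^2) ^ (-(3:ℝ)/2)) _ ((x,y) : ℝ×ℝ) :=
    hQ.rpow_const (Or.inl hp'.ne')
  have hN : HasFDerivAt (fun z : ℝ×ℝ => (1+lam)*z.1^2+(1-2*lam)*z.2^2) _ ((x,y) : ℝ×ℝ) :=
    ((h1.sq').const_mul (1+lam)).add ((h2.sq').const_mul (1-2*lam))
  have hA : HasFDerivAt (fun z : ℝ×ℝ => -(3:ℝ)/2 * (2*z.1*a + 2*z.2*b)) _ ((x,y) : ℝ×ℝ) :=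
    (((h1.const_mul 2).mul_const a).add ((h2.const_mul 2).mul_const b)).const_mul (-(3:ℝ)/2)
  have hB : HasFDerivAt (fun z : ℝ×ℝ => 2*(1+lam)*z.1*a + 2*(1-2*lam)*z.2*b) _ ((x,y) : ℝ×ℝ) :=
    ((h1.const_mul (2*(1+lam))).mul_const a).add ((h2.const_mul (2*(1-2*lam))).mul_const b)
  have hD1 : HasFDerivAt (D1f lam a b) _ ((x,y) : ℝ×ℝ) :=
    (hA.mul (hr5.mul (hN.sq'))).add (hB.mul ((hr3.mul hN).const_mul 2))
  rw [hD1.fderiv]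
  simp only [add_apply, smul_apply, coe_fst', coe_snd', smul_eq_mul, Pi.mul_apply]
  rw [show (-(5:ℝ)/2 - 1 : ℝ) = -(7:ℝ)/2 from by norm_num,
      show (-(3:ℝ)/2 - 1 : ℝ) = -(5:ℝ)/2 from by norm_num]
  have e5 : ((x:ℝ)^2+y^2) ^ (-(5:ℝ)/2) = (x^2+y^2) ^ (-(7:ℝ)/2) * (x^2+y^2) := by
    rw [show (-(5:ℝ)/2) = -(7:ℝ)/2 + 1 from by norm_num, Real.rpow_add hp, Real.rpow_one]
  have e3 : ((x:ℝ)^2+y^2) ^ (-(3:ℝ)/2) = (x^2+y^2) ^ (-(7:ℝ)/2) * (x^2+y^2) * (x^2+y^2) := by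
    rw [show (-(3:ℝ)/2) = -(7:ℝ)/2 + 1 + 1 from by norm_num, Real.rpow_add hp,
      Real.rpow_add hp, Real.rpow_one]
  simp only [] at *
  rw [e5, e3]
  ring

/-- The quadratic form `a² ∂²g/∂x² + 2ab ∂²g/∂x∂y + b² ∂²g/∂y²` is the second
directional derivative of `g` along the vector `(a, b)`. -/
theorem stmt7 (lam : ℝ) (g : ℝ × ℝ → ℝ)
    (hg : ∀ p : ℝ × ℝ, p ≠ 0 →
      g p = (p.1 ^ 2 + p.2 ^ 2) ^ ((1 : ℝ) / 2) *
        (1 + lam * (p.1 ^ 2 - 2 * p.2 ^ 2) / (p.1 ^ 2 + p.2 ^ 2)) ^ 2)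
    (a b x y : ℝ) (hxy : (x, y) ≠ (0, 0)) :
    fderiv ℝ (fun p => fderiv ℝ g p (a, b)) (x, y) (a, b) =
      (x ^ 2 + y ^ 2) ^ (-(7 : ℝ) / 2) * (a * y - b * x) ^ 2 *
        (x ^ 4 * (1 - 10 * lam - 11 * lam ^ 2) +
          x ^ 2 * y ^ 2 * (2 - 2 * lam + 104 * lam ^ 2) +
          y ^ 4 * (1 + 8 * lam - 20 * lam ^ 2)) := by
  have hxy0 : ((x,y) : ℝ×ℝ) ≠ 0 := by
    simpa [Prod.ext_iff] using hxy
  have hq : (0:ℝ) < x ^ 2 + y ^ 2 := qpos' hxy0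
  -- g agrees with the cleaner form G on the complement of 0
  have hgG : ∀ p : ℝ × ℝ, p ≠ 0 →
      g p = (p.1^2+p.2^2) ^ (-(3:ℝ)/2) * ((1+lam)*p.1^2+(1-2*lam)*p.2^2)^2 := by
    intro p hp
    have hqp := qpos' hp
    rw [hg p hp]
    have hA : (1 + lam * (p.1 ^ 2 - 2 * p.2 ^ 2) / (p.1 ^ 2 + p.2 ^ 2)) =
        ((1+lam)*p.1^2+(1-2*lam)*p.2^2) / (p.1^2+p.2^2) := by
      field_simp
      ring
    have hB : (p.1^2+p.2^2 : ℝ) ^ (-(3:ℝ)/2) =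
        (p.1^2+p.2^2) ^ ((1:ℝ)/2) / (p.1^2+p.2^2)^2 := by
      rw [show (-(3:ℝ)/2) = (1:ℝ)/2 - 2 from by norm_num, Real.rpow_sub hqp, Real.rpow_two]
    rw [hA, div_pow, hB]
    field_simp
  have hmem : {p : ℝ × ℝ | p ≠ 0} ∈ nhds ((x,y) : ℝ×ℝ) := by
    simpa [Set.compl_singleton_eq] using compl_singleton_mem_nhds hxy0
  have key : (fun p => fderiv ℝ g p (a,b)) =ᶠ[nhds ((x,y) : ℝ×ℝ)] D1f lam a b := by
    filter_upwards [hmem] with p hp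
    have heq : g =ᶠ[nhds p] (fun z : ℝ×ℝ =>
        (z.1^2+z.2^2) ^ (-(3:ℝ)/2) * ((1+lam)*z.1^2+(1-2*lam)*z.2^2)^2) := by
      have hmem' : {p : ℝ × ℝ | p ≠ 0} ∈ nhds p := by
        simpa [Set.compl_singleton_eq] using compl_singleton_mem_nhds hp
      filter_upwards [hmem'] with z hz
      exact hgG z hz
    rw [heq.fderiv_eq]
    exact lem2 lam a b p (qpos' hp)
  rw [key.fderiv_eq]
  exact lem3 lam a b x y hq
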